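/- arXiv:1311.5392 — 4 statements merged into one kernel-verified Lean document; each statement's English description precedes it below -/
import Mathlib

section
/- For every x ∈ ℝ one has φ₁(x) < φ₂(x), i.e. ∫₀^∞ 1/(e^{t−x}+1) dt < ∫₀^∞ t/(e^{t−x}+1) dt. -/
open MeasureTheory Set

/-- The Fermi integral of order `s`: `φ_s(x) = (1/Γ(s)) ∫₀^∞ t^{s-1}/(e^{t-x}+1) dt`. -/
noncomputable def fermi (s x : ℝ) : ℝ :=
  (1 / Real.Gamma s) * ∫ t in Set.Ioi (0 : ℝ), t ^ (s - 1) / (Real.exp (t - x) + 1)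

/-- `𝓘_N^s(A,B) = (1/π) ∫₀^π cos(Nθ) φ_s(A + B cos θ) dθ`. -/
noncomputable def calI (N : ℕ) (s A B : ℝ) : ℝ :=
  (1 / Real.pi) * ∫ θ in (0 : ℝ)..Real.pi, Real.cos (N * θ) * fermi s (A + B * Real.cos θ)

section Aux
open Real Filter

private lemma aux_pos (x t : ℝ) : 0 < Real.exp (t - x) + 1 := by positivity

private lemma aux_inv_eq (x t : ℝ) :
    Real.exp (x - t) / (1 + Real.exp (x - t)) = 1 / (Real.exp (t - x) + 1) := by
  rw [div_eq_div_iff (by positivity) (by positivity)]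
  have h : Real.exp (x - t) * Real.exp (t - x) = 1 := by
    rw [← Real.exp_add]; ring_nf; exact Real.exp_zero
  nlinarith [h]

private lemma aux_bound (x t : ℝ) : 1 / (Real.exp (t - x) + 1) ≤ Real.exp (x - t) := by
  rw [div_le_iff₀ (aux_pos x t)]
  have h : Real.exp (x - t) * Real.exp (t - x) = 1 := by
    rw [← Real.exp_add]; ring_nf; exact Real.exp_zero
  nlinarith [Real.exp_pos (x - t)]

private lemma aux_dom (x : ℝ) : IntegrableOn (fun t : ℝ => Real.exp (x - t)) (Ioi 0) := by
  have h := (exp_neg_integrableOn_Ioi 0 (b := 1) one_pos)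
  have : (fun t : ℝ => Real.exp (x - t)) = fun t => Real.exp x * Real.exp (-1 * t) := by
    ext t; rw [← Real.exp_add]; ring_nf
  rw [this]
  exact h.const_mul _

private lemma aux_int1 (x : ℝ) :
    IntegrableOn (fun t : ℝ => 1 / (Real.exp (t - x) + 1)) (Ioi 0) := by
  refine (aux_dom x).mono' ?_ ?_
  · exact (continuous_const.div (by continuity) (fun t => (aux_pos x t).ne')).aestronglyMeasurable
  · filter_upwards with t
    rw [Real.norm_eq_abs, abs_of_pos (by positivity)]
    exact aux_bound x t

private lemma aux_dom2 (x : ℝ) :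
    IntegrableOn (fun t : ℝ => t * Real.exp (x - t)) (Ioi 0) := by
  have h := Real.GammaIntegral_convergent (s := 2) two_pos
  have h2 : IntegrableOn (fun t : ℝ => Real.exp x * (Real.exp (-t) * t ^ ((2:ℝ) - 1))) (Ioi 0) :=
    h.const_mul _
  refine h2.congr_fun ?_ measurableSet_Ioi
  intro t ht
  simp only []
  rw [show (2:ℝ) - 1 = 1 by norm_num, Real.rpow_one, show x - t = x + -t by ring,
    Real.exp_add]
  ring

private lemma aux_int2 (x : ℝ) :
    IntegrableOn (fun t : ℝ => t / (Real.exp (t - x) + 1)) (Ioi 0) := by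
  refine (aux_dom2 x).mono' ?_ ?_
  · exact (continuous_id.div (by continuity) (fun t => (aux_pos x t).ne')).aestronglyMeasurable
  · filter_upwards [ae_restrict_mem measurableSet_Ioi] with t ht
    have ht0 : (0:ℝ) < t := ht
    rw [Real.norm_eq_abs, abs_of_nonneg (by positivity)]
    calc t / (Real.exp (t - x) + 1) = t * (1 / (Real.exp (t - x) + 1)) := by ring
    _ ≤ t * Real.exp (x - t) := mul_le_mul_of_nonneg_left (aux_bound x t) ht0.le

private lemma aux_log_nonneg (x t : ℝ) : 0 ≤ Real.log (1 + Real.exp (x - t)) :=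
  Real.log_nonneg (by nlinarith [Real.exp_pos (x - t)])

private lemma aux_log_le (x t : ℝ) : Real.log (1 + Real.exp (x - t)) ≤ Real.exp (x - t) := by
  have := Real.log_le_sub_one_of_pos (x := 1 + Real.exp (x - t)) (by positivity)
  linarith

private lemma aux_int3 (x : ℝ) :
    IntegrableOn (fun t : ℝ => Real.log (1 + Real.exp (x - t))) (Ioi 0) := by
  refine (aux_dom x).mono' ?_ ?_
  · exact (Continuous.log (by continuity) (fun t => by positivity)).aestronglyMeasurable
  · filter_upwards with t
    rw [Real.norm_eq_abs, abs_of_nonneg (aux_log_nonneg x t)]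
    exact aux_log_le x t

private lemma aux_hd (x t : ℝ) :
    HasDerivAt (fun t : ℝ => Real.log (1 + Real.exp (x - t)))
      (Real.exp (x - t) * (-1) / (1 + Real.exp (x - t))) t := by
  have h1 : HasDerivAt (fun t : ℝ => x - t) (-1) t := (hasDerivAt_id t).const_sub x
  exact (h1.exp.const_add 1).log (by positivity)

private lemma aux_tendsto_exp (x : ℝ) :
    Tendsto (fun t : ℝ => Real.exp (x - t)) atTop (nhds 0) := by
  apply Real.tendsto_exp_atBot.comp
  apply tendsto_atBot_add_const_left atTop x
  simpa using (tendsto_neg_atTop_atBot (G := ℝ))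

private lemma aux_tendsto_log (x : ℝ) :
    Tendsto (fun t : ℝ => Real.log (1 + Real.exp (x - t))) atTop (nhds 0) := by
  have h : Tendsto (fun t : ℝ => 1 + Real.exp (x - t)) atTop (nhds 1) := by
    simpa using tendsto_const_nhds.add (aux_tendsto_exp x)
  simpa [Function.comp_def] using (Real.continuousAt_log one_ne_zero).tendsto.comp h

/-- `∫₀^∞ 1/(e^{t-x}+1) dt = log(1+e^x)`. -/
private lemma aux_eval1 (x : ℝ) :
    ∫ t in Ioi (0:ℝ), 1 / (Real.exp (t - x) + 1) = Real.log (1 + Real.exp x) := by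
  have hderiv : ∀ t ∈ Ici (0:ℝ),
      HasDerivAt (fun t : ℝ => -Real.log (1 + Real.exp (x - t)))
        (1 / (Real.exp (t - x) + 1)) t := by
    intro t _
    have h := (aux_hd x t).neg
    have he : -(Real.exp (x - t) * (-1) / (1 + Real.exp (x - t)))
        = 1 / (Real.exp (t - x) + 1) := by
      rw [← aux_inv_eq x t]; ring
    rwa [he] at h
  have htend : Tendsto (fun t : ℝ => -Real.log (1 + Real.exp (x - t))) atTop (nhds 0) := by
    simpa using (aux_tendsto_log x).neg
  have := integral_Ioi_of_hasDerivAt_of_tendsto' hderiv (aux_int1 x) htend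
  simpa using this

/-- `∫₀^∞ t/(e^{t-x}+1) dt = ∫₀^∞ log(1+e^{x-t}) dt`. -/
private lemma aux_eval2 (x : ℝ) :
    ∫ t in Ioi (0:ℝ), t / (Real.exp (t - x) + 1)
      = ∫ t in Ioi (0:ℝ), Real.log (1 + Real.exp (x - t)) := by
  have hderiv : ∀ t ∈ Ici (0:ℝ),
      HasDerivAt (fun t : ℝ => -(t * Real.log (1 + Real.exp (x - t))))
        (t / (Real.exp (t - x) + 1) - Real.log (1 + Real.exp (x - t))) t := by
    intro t _
    have h := ((hasDerivAt_id t).mul (aux_hd x t)).neg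
    have he : -(1 * Real.log (1 + Real.exp (x - t))
          + id t * (Real.exp (x - t) * (-1) / (1 + Real.exp (x - t))))
        = t / (Real.exp (t - x) + 1) - Real.log (1 + Real.exp (x - t)) := by
      rw [show t / (Real.exp (t - x) + 1) = t * (1 / (Real.exp (t - x) + 1)) by ring,
        ← aux_inv_eq x t]
      simp only [id]; ring
    rwa [he] at h
  have htend : Tendsto (fun t : ℝ => -(t * Real.log (1 + Real.exp (x - t))))
      atTop (nhds 0) := by
    rw [show (0:ℝ) = -0 by norm_num]
    apply Tendsto.neg
    apply squeeze_zero' (g := fun t : ℝ => Real.exp x * (t ^ 1 * Real.exp (-t)))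
    · filter_upwards [eventually_ge_atTop (0:ℝ)] with t ht
      exact mul_nonneg ht (aux_log_nonneg x t)
    · filter_upwards [eventually_ge_atTop (0:ℝ)] with t ht
      have := mul_le_mul_of_nonneg_left (aux_log_le x t) ht
      calc t * Real.log (1 + Real.exp (x - t)) ≤ t * Real.exp (x - t) := this
      _ = Real.exp x * (t ^ 1 * Real.exp (-t)) := by
          rw [show x - t = x + -t by ring, Real.exp_add]; ring
    · simpa using tendsto_const_nhds.mul (tendsto_pow_mul_exp_neg_atTop_nhds_zero 1)
  have key := integral_Ioi_of_hasDerivAt_of_tendsto' hderiv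
    ((aux_int2 x).sub (aux_int3 x)) htend
  rw [integral_sub (aux_int2 x) (aux_int3 x)] at key
  norm_num at key
  linarith

/-- pointwise strict inequality `e^{-t} log(1+e^x) < log(1+e^{x-t})` for `t > 0`. -/
private lemma aux_ptwise (x t : ℝ) (ht : 0 < t) :
    Real.exp (-t) * Real.log (1 + Real.exp x) < Real.log (1 + Real.exp (x - t)) := by
  set z := Real.exp (-t) with hz
  have hz0 : 0 < z := Real.exp_pos _
  have hz1 : z < 1 := Real.exp_lt_one_iff.mpr (by linarith)
  have h := strictConcaveOn_log_Ioi.2 (mem_Ioi.mpr one_pos)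
    (mem_Ioi.mpr (by positivity : (0:ℝ) < 1 + Real.exp x))
    (by nlinarith [Real.exp_pos x] : (1:ℝ) ≠ 1 + Real.exp x)
    (by linarith : (0:ℝ) < 1 - z) hz0 (by ring)
  simp only [smul_eq_mul, Real.log_one, mul_zero, zero_add, mul_one] at h
  rw [show (1:ℝ) + Real.exp (x - t) = 1 - z + z * (1 + Real.exp x) from by
    rw [show x - t = x + -t by ring, Real.exp_add]; ring]
  exact h

end Aux

/-- `φ₁(x) < φ₂(x)` for every real `x`. -/
theorem fermi_one_lt_fermi_two (x : ℝ) : fermi 1 x < fermi 2 x := by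
  have hf1 : fermi 1 x = Real.log (1 + Real.exp x) := by
    rw [fermi, Real.Gamma_one]
    norm_num
    simpa [one_div] using aux_eval1 x
  have hf2 : fermi 2 x = ∫ t in Ioi (0:ℝ), Real.log (1 + Real.exp (x - t)) := by
    rw [fermi, Real.Gamma_two]
    norm_num
    exact aux_eval2 x
  rw [hf1, hf2]
  -- compare with ∫ e^{-t} * log(1+e^x)
  have hintc : IntegrableOn (fun t : ℝ => Real.exp (-t) * Real.log (1 + Real.exp x))
      (Ioi 0) := by
    have h : IntegrableOn (fun t : ℝ => Real.exp (-1 * t) * Real.log (1 + Real.exp x))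
        (Ioi 0) :=
      (exp_neg_integrableOn_Ioi 0 (b := 1) one_pos).mul_const (Real.log (1 + Real.exp x))
    refine h.congr_fun (fun t _ => by norm_num) measurableSet_Ioi
  have hc : ∫ t in Ioi (0:ℝ), Real.exp (-t) * Real.log (1 + Real.exp x)
      = Real.log (1 + Real.exp x) := by
    rw [integral_mul_const, integral_exp_neg_Ioi_zero, one_mul]
  have hdiff : 0 < ∫ t in Ioi (0:ℝ),
      (Real.log (1 + Real.exp (x - t)) - Real.exp (-t) * Real.log (1 + Real.exp x)) := by
    rw [setIntegral_pos_iff_support_of_nonneg_ae]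
    · apply lt_of_lt_of_le (b := volume (Ioi (0:ℝ)))
      · rw [Real.volume_Ioi]; exact ENNReal.zero_lt_top
      · apply measure_mono
        intro t ht
        exact ⟨ne_of_gt (sub_pos.mpr (aux_ptwise x t ht)), ht⟩
    · filter_upwards [ae_restrict_mem measurableSet_Ioi] with t ht
      exact le_of_lt (sub_pos.mpr (aux_ptwise x t ht))
    · exact (aux_int3 x).sub hintc
  rw [integral_sub (aux_int3 x) hintc, hc] at hdiff
  linarith
end

section
/- As ψ → 0⁺ one has 𝓕₁²(ψ)/𝓕₀²(ψ) = ψ + O(ψ³) and ( 𝓕₀²(ψ) + 𝓕₂²(ψ) ) / ( 2 𝓕₀²(ψ) ) = 1/2 + ψ²/8 + O(ψ⁴). -/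
open MeasureTheory Set Filter Asymptotics

/-- `C(ψ) = π` for `0 ≤ ψ ≤ π/4`, `C(ψ) = arccos(-cot ψ)` for `π/4 < ψ < 3π/4`. -/
noncomputable def Cpsi (ψ : ℝ) : ℝ :=
  if ψ ≤ Real.pi / 4 then Real.pi else Real.arccos (-(Real.cos ψ / Real.sin ψ))

/-- `𝓕_N^s(ψ) = (1/(πΓ(s+1))) ∫₀^{C(ψ)} cos(Nθ)(cos ψ + sin ψ cos θ)^s dθ`. -/
noncomputable def calF (N : ℕ) (s ψ : ℝ) : ℝ :=
  (1 / (Real.pi * Real.Gamma (s + 1))) *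
    ∫ θ in (0 : ℝ)..Cpsi ψ, Real.cos (N * θ) * (Real.cos ψ + Real.sin ψ * Real.cos θ) ^ s

/-- `u(ψ) = 𝓕₁²(ψ)/𝓕₀²(ψ)`. -/
noncomputable def uFun (ψ : ℝ) : ℝ := calF 1 2 ψ / calF 0 2 ψ

/-- `Y(ψ) = (𝓕₀²(ψ)+𝓕₂²(ψ))/(2𝓕₀²(ψ))`. -/
noncomputable def Yfun (ψ : ℝ) : ℝ := (calF 0 2 ψ + calF 2 2 ψ) / (2 * calF 0 2 ψ)

/-- `Z(ψ) = (𝓕₀¹(ψ)-𝓕₂¹(ψ))/(2√(2𝓕₀²(ψ)))`. -/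
noncomputable def Zfun (ψ : ℝ) : ℝ :=
  (calF 0 1 ψ - calF 2 1 ψ) / (2 * Real.sqrt (2 * calF 0 2 ψ))

/-- `Z_⊥(ψ) = (𝓕₀¹(ψ)+𝓕₂¹(ψ))/(2√(2𝓕₀²(ψ)))`. -/
noncomputable def Zperp (ψ : ℝ) : ℝ :=
  (calF 0 1 ψ + calF 2 1 ψ) / (2 * Real.sqrt (2 * calF 0 2 ψ))

open Real

lemma I0 (a b : ℝ) :
    ∫ θ in (0:ℝ)..π, (a + b * cos θ) ^ 2 = π * (a^2 + b^2/2) := by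
  have key : ∀ x ∈ Set.uIcc (0:ℝ) π,
      HasDerivAt (fun θ => (a^2 + b^2/2)*θ + 2*a*b*Real.sin θ
        + b^2/2 * (Real.sin θ * Real.cos θ)) ((a + b * cos x)^2) x := by
    intro x _
    have h : HasDerivAt (fun θ => (a^2 + b^2/2)*θ + 2*a*b*Real.sin θ
        + b^2/2 * (Real.sin θ * Real.cos θ))
        ((a^2 + b^2/2) * 1 + 2*a*b*(Real.cos x)
          + b^2/2 * (Real.cos x * Real.cos x + Real.sin x * (-Real.sin x))) x := by
      exact (((hasDerivAt_id x).const_mul _).add ((Real.hasDerivAt_sin x).const_mul _)).add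
        (((Real.hasDerivAt_sin x).mul (Real.hasDerivAt_cos x)).const_mul _)
    convert h using 1
    linear_combination (b^2/2) * Real.sin_sq_add_cos_sq x
  rw [intervalIntegral.integral_eq_sub_of_hasDerivAt key
    ((Continuous.intervalIntegrable (by continuity) _ _))]
  simp [Real.sin_pi]
  ring

lemma I1 (a b : ℝ) :
    ∫ θ in (0:ℝ)..π, cos θ * (a + b * cos θ) ^ 2 = π * (a*b) := by
  have key : ∀ x ∈ Set.uIcc (0:ℝ) π,
      HasDerivAt (fun θ => a^2 * Real.sin θ + a*b*(θ + Real.sin θ * Real.cos θ)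
        + b^2 * (Real.sin θ - Real.sin θ^3/3)) (cos x * (a + b * cos x)^2) x := by
    intro x _
    have h : HasDerivAt (fun θ => a^2 * Real.sin θ + a*b*(θ + Real.sin θ * Real.cos θ)
        + b^2 * (Real.sin θ - Real.sin θ^3/3))
        (a^2 * Real.cos x + a*b*(1 + (Real.cos x * Real.cos x + Real.sin x * (-Real.sin x)))
          + b^2 * (Real.cos x - (3 * Real.sin x^2 * Real.cos x)/3)) x := by
      exact (((Real.hasDerivAt_sin x).const_mul _).add
        (((hasDerivAt_id x).add ((Real.hasDerivAt_sin x).mul (Real.hasDerivAt_cos x))).const_mul _)).add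
        ((((Real.hasDerivAt_sin x).sub (((Real.hasDerivAt_sin x).pow 3).div_const 3))).const_mul _)
    convert h using 1
    linear_combination (a*b + b^2*Real.cos x) * Real.sin_sq_add_cos_sq x
  rw [intervalIntegral.integral_eq_sub_of_hasDerivAt key
    ((Continuous.intervalIntegrable (by continuity) _ _))]
  simp [Real.sin_pi]
  ring

lemma I2 (a b : ℝ) :
    ∫ θ in (0:ℝ)..π, cos (2*θ) * (a + b * cos θ) ^ 2 = π * b^2/4 := by
  have key : ∀ x ∈ Set.uIcc (0:ℝ) π,
      HasDerivAt (fun θ => a^2 * (Real.sin θ * Real.cos θ)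
        + (4*a*b/3) * (Real.sin θ * Real.cos θ^2 + 2 * Real.sin θ) - 2*a*b*Real.sin θ
        + b^2 * (Real.sin θ * Real.cos θ^3/2 + (Real.sin θ * Real.cos θ + θ)/4))
        (cos (2*x) * (a + b * cos x)^2) x := by
    intro x _
    have h : HasDerivAt (fun θ => a^2 * (Real.sin θ * Real.cos θ)
        + (4*a*b/3) * (Real.sin θ * Real.cos θ^2 + 2 * Real.sin θ) - 2*a*b*Real.sin θ
        + b^2 * (Real.sin θ * Real.cos θ^3/2 + (Real.sin θ * Real.cos θ + θ)/4))
        (a^2 * (Real.cos x * Real.cos x + Real.sin x * (-Real.sin x))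
          + (4*a*b/3) * ((Real.cos x * Real.cos x^2 + Real.sin x * (2 * Real.cos x^1 * (-Real.sin x)))
              + 2 * Real.cos x)
          - 2*a*b*Real.cos x
          + b^2 * ((Real.cos x * Real.cos x^3 + Real.sin x * (3 * Real.cos x^2 * (-Real.sin x)))/2
              + ((Real.cos x * Real.cos x + Real.sin x * (-Real.sin x)) + 1)/4)) x := by
      exact (((((Real.hasDerivAt_sin x).mul (Real.hasDerivAt_cos x)).const_mul _).add
        ((((Real.hasDerivAt_sin x).mul ((Real.hasDerivAt_cos x).pow 2)).add
          ((Real.hasDerivAt_sin x).const_mul 2)).const_mul _)).sub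
        ((Real.hasDerivAt_sin x).const_mul _)).add
        (((((Real.hasDerivAt_sin x).mul ((Real.hasDerivAt_cos x).pow 3)).div_const 2).add
          ((((Real.hasDerivAt_sin x).mul (Real.hasDerivAt_cos x)).add (hasDerivAt_id x)).div_const 4)).const_mul _)
    convert h using 1
    rw [Real.cos_two_mul]
    linear_combination (a^2 + (8*a*b/3)*Real.cos x + (3*b^2/2)*Real.cos x^2 + b^2/4) * Real.sin_sq_add_cos_sq x
  rw [intervalIntegral.integral_eq_sub_of_hasDerivAt key
    ((Continuous.intervalIntegrable (by continuity) _ _))]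
  simp [Real.sin_pi]
  ring


lemma gamma3 : Real.Gamma ((2:ℝ) + 1) = 2 := by
  rw [show ((2:ℝ)+1) = ((2:ℕ):ℝ)+1 by norm_num, Real.Gamma_nat_eq_factorial]; norm_num

lemma calF02 (ψ : ℝ) (h : ψ ≤ π/4) :
    calF 0 2 ψ = (cos ψ^2 + sin ψ^2/2)/2 := by
  unfold calF Cpsi
  rw [if_pos h, gamma3]
  have : ∀ θ : ℝ, Real.cos ((0:ℕ) * θ) * (Real.cos ψ + Real.sin ψ * Real.cos θ) ^ (2:ℝ)
      = (Real.cos ψ + Real.sin ψ * Real.cos θ) ^ 2 := by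
    intro θ; rw [Real.rpow_two]; simp
  simp only [this, I0]
  have hπ := Real.pi_ne_zero
  field_simp

lemma calF12 (ψ : ℝ) (h : ψ ≤ π/4) :
    calF 1 2 ψ = cos ψ * sin ψ / 2 := by
  unfold calF Cpsi
  rw [if_pos h, gamma3]
  have : ∀ θ : ℝ, Real.cos ((1:ℕ) * θ) * (Real.cos ψ + Real.sin ψ * Real.cos θ) ^ (2:ℝ)
      = Real.cos θ * (Real.cos ψ + Real.sin ψ * Real.cos θ) ^ 2 := by
    intro θ; rw [Real.rpow_two]; simp
  simp only [this, I1]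
  have hπ := Real.pi_ne_zero
  field_simp

lemma calF22 (ψ : ℝ) (h : ψ ≤ π/4) :
    calF 2 2 ψ = sin ψ^2 / 8 := by
  unfold calF Cpsi
  rw [if_pos h, gamma3]
  have : ∀ θ : ℝ, Real.cos ((2:ℕ) * θ) * (Real.cos ψ + Real.sin ψ * Real.cos θ) ^ (2:ℝ)
      = Real.cos (2*θ) * (Real.cos ψ + Real.sin ψ * Real.cos θ) ^ 2 := by
    intro θ; rw [Real.rpow_two]; norm_num
  simp only [this, I2]
  have hπ := Real.pi_ne_zero
  field_simp
  ring

set_option maxHeartbeats 1000000 in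
/-- As `ψ → 0⁺`: `𝓕₁²/𝓕₀² = ψ + O(ψ³)` and `(𝓕₀²+𝓕₂²)/(2𝓕₀²) = 1/2 + ψ²/8 + O(ψ⁴)`. -/
theorem calF_ratio_expansion_at_zero :
    ((fun ψ => calF 1 2 ψ / calF 0 2 ψ - ψ) =O[nhdsWithin 0 (Set.Ioi 0)]
      fun ψ => ψ ^ 3) ∧
    ((fun ψ => (calF 0 2 ψ + calF 2 2 ψ) / (2 * calF 0 2 ψ) - (1 / 2 + ψ ^ 2 / 8))
      =O[nhdsWithin 0 (Set.Ioi 0)] fun ψ => ψ ^ 4) := by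
  have hmem : Set.Ioo (0:ℝ) (1/2) ∈ nhdsWithin (0:ℝ) (Set.Ioi 0) :=
    Ioo_mem_nhdsGT_of_mem (by constructor <;> norm_num)
  have hπ4 : (1:ℝ)/2 ≤ π/4 := by nlinarith [Real.pi_gt_three]
  constructor
  · rw [isBigO_iff]
    refine ⟨3, ?_⟩
    filter_upwards [hmem] with ψ hψ
    obtain ⟨h0, h1⟩ := hψ
    have hle : ψ ≤ π/4 := le_trans (le_of_lt h1) hπ4
    set c := Real.cos ψ with hc
    set s := Real.sin ψ with hs
    have pyth : s^2 + c^2 = 1 := Real.sin_sq_add_cos_sq ψ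
    have hs_pos : 0 < s := Real.sin_pos_of_pos_of_lt_pi h0 (by nlinarith [Real.pi_gt_three])
    have hc_pos : 0 < c := Real.cos_pos_of_mem_Ioo ⟨by nlinarith [Real.pi_gt_three], by nlinarith [Real.pi_gt_three]⟩
    have hs_lt : s < ψ := Real.sin_lt h0
    have hs_gt : ψ - ψ^3/4 < s := lt_of_le_of_lt (by linarith [pow_pos h0 3]) (Real.sin_gt_sub_cube h0)
    have h2lt : 2*s*c < 2*ψ := by
      have := Real.sin_lt (x := 2*ψ) (by linarith)
      rwa [Real.sin_two_mul] at this
    have h2gt : 2*ψ - (2*ψ)^3/4 < 2*s*c := by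
      have := Real.sin_gt_sub_cube (x := 2*ψ) (by linarith)
      rw [Real.sin_two_mul] at this
      exact lt_of_le_of_lt (by linarith [pow_pos (by linarith : (0:ℝ) < 2*ψ) 3]) this
    have hD : (0:ℝ) < c^2 + s^2/2 := by positivity
    have key : calF 1 2 ψ / calF 0 2 ψ = c*s/(c^2+s^2/2) := by
      rw [calF12 ψ hle, calF02 ψ hle]
      rw [div_div_div_comm]
      norm_num
      rfl
    clear_value c s
    rw [key, Real.norm_eq_abs, Real.norm_eq_abs, abs_of_pos (by positivity : (0:ℝ) < ψ^3)]
    have hψ2 : ψ^2 < 1/4 := by nlinarith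
    have hs2_lt : s^2 < ψ^2 := by
      have h5 := mul_self_lt_mul_self hs_pos.le hs_lt
      ring_nf at h5 ⊢
      linarith
    have hc2 : c^2 = 1 - s^2 := by linarith
    have ha : ψ*s^2 < ψ^3 := by
      have := mul_lt_mul_of_pos_left hs2_lt h0
      linarith
    have hb : ψ^3*s^2 < ψ^5 := by
      have := mul_lt_mul_of_pos_left hs2_lt (pow_pos h0 3)
      linarith
    have hf : ψ^5 < ψ^3/4 := by
      have := mul_lt_mul_of_pos_left hψ2 (pow_pos h0 3)
      linarith
    have hg : 0 ≤ ψ*s^2 := by positivity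
    have h2lt' : s*c < ψ := by linarith [h2lt]
    have h2gt' : ψ - ψ^3 < s*c := by linarith [h2gt]
    have hub : c*s/(c^2+s^2/2) ≤ ψ + 3*ψ^3 := by
      rw [div_le_iff₀ hD, hc2]
      ring_nf
      linarith [ha, hb, hf, h2lt']
    have hlb : ψ - 3*ψ^3 ≤ c*s/(c^2+s^2/2) := by
      rw [le_div_iff₀ hD, hc2]
      ring_nf
      linarith [hb, hf, hg, h2gt']
    rw [abs_le]
    constructor <;> linarith
  · rw [isBigO_iff]
    refine ⟨1, ?_⟩
    filter_upwards [hmem] with ψ hψ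
    obtain ⟨h0, h1⟩ := hψ
    have hle : ψ ≤ π/4 := le_trans (le_of_lt h1) hπ4
    set c := Real.cos ψ with hc
    set s := Real.sin ψ with hs
    have pyth : s^2 + c^2 = 1 := Real.sin_sq_add_cos_sq ψ
    have hs_pos : 0 < s := Real.sin_pos_of_pos_of_lt_pi h0 (by nlinarith [Real.pi_gt_three])
    have hc_pos : 0 < c := Real.cos_pos_of_mem_Ioo ⟨by nlinarith [Real.pi_gt_three], by nlinarith [Real.pi_gt_three]⟩
    have hs_lt : s < ψ := Real.sin_lt h0
    have hs_gt : ψ - ψ^3/4 < s := lt_of_le_of_lt (by linarith [pow_pos h0 3]) (Real.sin_gt_sub_cube h0)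
    have hD : (0:ℝ) < c^2 + s^2/2 := by positivity
    have key : (calF 0 2 ψ + calF 2 2 ψ) / (2 * calF 0 2 ψ)
        = ((c^2+s^2/2)/2 + s^2/8) / (c^2+s^2/2) := by
      rw [calF02 ψ hle, calF22 ψ hle]
      rw [show (2:ℝ) * ((c^2+s^2/2)/2) = c^2+s^2/2 by ring]
    clear_value c s
    rw [key, Real.norm_eq_abs, Real.norm_eq_abs, abs_of_pos (by positivity : (0:ℝ) < ψ^4)]
    have hψ2 : ψ^2 < 1/4 := by nlinarith
    have hs2_lt : s^2 < ψ^2 := by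
      have h5 := mul_self_lt_mul_self hs_pos.le hs_lt
      ring_nf at h5 ⊢
      linarith
    have hlow : 0 < ψ - ψ^3/4 := by
      have := mul_lt_mul_of_pos_left hψ2 h0
      linarith
    have hs2_gt : ψ^2 - ψ^4/2 < s^2 := by
      have h6 := mul_self_lt_mul_self hlow.le hs_gt
      have h7 : (0:ℝ) ≤ (ψ^3)^2 := sq_nonneg _
      ring_nf at h6 h7 ⊢
      linarith
    have hc2 : c^2 = 1 - s^2 := by linarith
    have hd : ψ^2*s^2 < ψ^4 := by
      have := mul_lt_mul_of_pos_left hs2_lt (pow_pos h0 2)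
      linarith
    have he : ψ^4*s^2 < ψ^4/4 := by
      have hs4 : s^2 < 1/4 := lt_trans hs2_lt hψ2
      have := mul_lt_mul_of_pos_left hs4 (pow_pos h0 4)
      linarith
    have hg2 : 0 ≤ ψ^2*s^2 := by positivity
    have hub : ((c^2+s^2/2)/2 + s^2/8) / (c^2+s^2/2) ≤ (1/2 + ψ^2/8) + ψ^4 := by
      rw [div_le_iff₀ hD, hc2]
      ring_nf
      linarith [hd, he, hs2_lt]
    have hlb : (1/2 + ψ^2/8) - ψ^4 ≤ ((c^2+s^2/2)/2 + s^2/8) / (c^2+s^2/2) := by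
      rw [le_div_iff₀ hD, hc2]
      ring_nf
      linarith [hg2, he, hs2_gt]
    rw [abs_le]
    constructor <;> linarith
end

section
/- As ψ → 0⁺ one has ( 𝓕₀¹(ψ) + 𝓕₂¹(ψ) ) / ( 2 √(2 𝓕₀²(ψ)) ) = 1/2 − ψ²/8 + O(ψ⁴) and ( 𝓕₀¹(ψ) − 𝓕₂¹(ψ) ) / ( 2 √(2 𝓕₀²(ψ)) ) = 1/2 − ψ²/8 + O(ψ⁴). -/
open MeasureTheory Set Filter Asymptotics

section AuxLemmas
open intervalIntegral


lemma Cpsi_eq {ψ : ℝ} (h : ψ ≤ Real.pi / 4) : Cpsi ψ = Real.pi := if_pos h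

lemma my_calF01 {ψ : ℝ} (h : ψ ≤ Real.pi / 4) : calF 0 1 ψ = Real.cos ψ := by
  have hD : ∀ θ ∈ Set.uIcc (0:ℝ) Real.pi,
      HasDerivAt (fun θ => Real.cos ψ * θ + Real.sin ψ * Real.sin θ)
        (Real.cos (0 * θ) * (Real.cos ψ + Real.sin ψ * Real.cos θ) ^ (1:ℝ)) θ := by
    intro θ _
    have h1 : HasDerivAt (fun θ : ℝ => Real.cos ψ * θ) (Real.cos ψ) θ := by
      simpa using (hasDerivAt_id θ).const_mul (Real.cos ψ)
    have h2 : HasDerivAt (fun θ : ℝ => Real.sin ψ * Real.sin θ) (Real.sin ψ * Real.cos θ) θ :=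
      (Real.hasDerivAt_sin θ).const_mul _
    simpa using h1.fun_add h2
  have hInt : calF 0 1 ψ = (1 / (Real.pi * Real.Gamma 2)) *
      ∫ θ in (0:ℝ)..Real.pi, Real.cos (0 * θ) * (Real.cos ψ + Real.sin ψ * Real.cos θ) ^ (1:ℝ) := by
    rw [calF, Cpsi_eq h]; norm_num
  rw [hInt, integral_eq_sub_of_hasDerivAt hD (by apply Continuous.intervalIntegrable; continuity)]
  simp [Real.Gamma_two, Real.sin_pi]
  field_simp

lemma my_calF21 {ψ : ℝ} (h : ψ ≤ Real.pi / 4) : calF 2 1 ψ = 0 := by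
  have hD : ∀ θ ∈ Set.uIcc (0:ℝ) Real.pi,
      HasDerivAt (fun θ => Real.cos ψ * (Real.sin (2*θ)/2)
          + Real.sin ψ * (Real.sin (3*θ)/6 + Real.sin θ/2))
        (Real.cos ((2:ℕ) * θ) * (Real.cos ψ + Real.sin ψ * Real.cos θ) ^ (1:ℝ)) θ := by
    intro θ _
    have h2θ : HasDerivAt (fun θ : ℝ => 2*θ) 2 θ := by
      simpa using (hasDerivAt_id θ).const_mul (2:ℝ)
    have h3θ : HasDerivAt (fun θ : ℝ => 3*θ) 3 θ := by
      simpa using (hasDerivAt_id θ).const_mul (3:ℝ)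
    have hs2 : HasDerivAt (fun θ : ℝ => Real.sin (2*θ)) (Real.cos (2*θ) * 2) θ :=
      (Real.hasDerivAt_sin (2*θ)).comp θ h2θ
    have hs3 : HasDerivAt (fun θ : ℝ => Real.sin (3*θ)) (Real.cos (3*θ) * 3) θ :=
      (Real.hasDerivAt_sin (3*θ)).comp θ h3θ
    have h1 := ((hs2.div_const 2).const_mul (Real.cos ψ)).fun_add
      (((hs3.div_const 6).fun_add ((Real.hasDerivAt_sin θ).div_const 2)).const_mul (Real.sin ψ))
    refine h1.congr_deriv ?_
    rw [Real.rpow_one, Real.cos_three_mul]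
    push_cast
    rw [Real.cos_two_mul]
    ring
  have hInt : calF 2 1 ψ = (1 / (Real.pi * Real.Gamma 2)) *
      ∫ θ in (0:ℝ)..Real.pi, Real.cos ((2:ℕ) * θ) * (Real.cos ψ + Real.sin ψ * Real.cos θ) ^ (1:ℝ) := by
    rw [calF, Cpsi_eq h]; norm_num
  rw [hInt, integral_eq_sub_of_hasDerivAt hD (by apply Continuous.intervalIntegrable; continuity)]
  have : Real.sin (2*Real.pi) = 0 := by simp [Real.sin_two_pi]
  have h3 : Real.sin (3*Real.pi) = 0 := by
    rw [show (3:ℝ)*Real.pi = Real.pi + 2*Real.pi by ring]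
    simp [Real.sin_add]
  simp [this, h3, Real.sin_pi]

lemma my_calF02 {ψ : ℝ} (h : ψ ≤ Real.pi / 4) : calF 0 2 ψ = (2 - Real.sin ψ ^ 2) / 4 := by
  have hΓ : Real.Gamma 3 = 2 := by
    have h := Real.Gamma_nat_eq_factorial 2
    norm_num [Nat.factorial] at h
    convert h using 2 <;> norm_num
  have hD : ∀ θ ∈ Set.uIcc (0:ℝ) Real.pi,
      HasDerivAt (fun θ => Real.cos ψ^2 * θ + 2*Real.sin ψ*Real.cos ψ * Real.sin θ
          + Real.sin ψ^2 * (θ/2 + Real.sin (2*θ)/4))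
        (Real.cos (0 * θ) * (Real.cos ψ + Real.sin ψ * Real.cos θ) ^ (2:ℝ)) θ := by
    intro θ _
    have h2θ : HasDerivAt (fun θ : ℝ => 2*θ) 2 θ := by
      simpa using (hasDerivAt_id θ).const_mul (2:ℝ)
    have hs2 : HasDerivAt (fun θ : ℝ => Real.sin (2*θ)) (Real.cos (2*θ) * 2) θ :=
      (Real.hasDerivAt_sin (2*θ)).comp θ h2θ
    have h1 : HasDerivAt (fun θ : ℝ => Real.cos ψ^2 * θ) (Real.cos ψ^2) θ := by
      simpa using (hasDerivAt_id θ).const_mul (Real.cos ψ^2)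
    have h2 : HasDerivAt (fun θ : ℝ => 2*Real.sin ψ*Real.cos ψ * Real.sin θ)
        (2*Real.sin ψ*Real.cos ψ * Real.cos θ) θ := (Real.hasDerivAt_sin θ).const_mul _
    have h3 : HasDerivAt (fun θ : ℝ => Real.sin ψ^2 * (θ/2 + Real.sin (2*θ)/4))
        (Real.sin ψ^2 * (1/2 + Real.cos (2*θ)*2/4)) θ := by
      exact (((hasDerivAt_id θ).div_const 2).add (hs2.div_const 4)).const_mul _
    have := (h1.fun_add h2).fun_add h3
    refine this.congr_deriv ?_
    have hrpow : (Real.cos ψ + Real.sin ψ * Real.cos θ) ^ (2:ℝ)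
        = (Real.cos ψ + Real.sin ψ * Real.cos θ) ^ (2:ℕ) := by
      rw [← Real.rpow_natCast]; norm_num
    rw [hrpow, Real.cos_two_mul, zero_mul, Real.cos_zero]
    push_cast
    ring
  have hInt : calF 0 2 ψ = (1 / (Real.pi * Real.Gamma 3)) *
      ∫ θ in (0:ℝ)..Real.pi, Real.cos (0 * θ) * (Real.cos ψ + Real.sin ψ * Real.cos θ) ^ (2:ℝ) := by
    rw [calF, Cpsi_eq h]; norm_num
  rw [hInt, integral_eq_sub_of_hasDerivAt hD (by apply Continuous.intervalIntegrable; continuity)]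
  have hsp : Real.sin (2*Real.pi) = 0 := Real.sin_two_pi
  have hpy : Real.cos ψ^2 = 1 - Real.sin ψ^2 := by
    have := Real.sin_sq_add_cos_sq ψ; linarith
  rw [hΓ]
  simp [hsp, Real.sin_pi]
  field_simp
  rw [hpy]
  ring

set_option maxHeartbeats 400000 in
lemma my_aux (ψ s c r : ℝ) (h0 : 0 < ψ) (h1 : ψ < 1) (hs_lt : s < ψ)
    (hs_gt : ψ - ψ^3/4 < s) (hpy : s^2 + c^2 = 1) (hc_pos : 0 < c)
    (hr2 : r^2 = (2 - s^2)/2) (hr_nn : 0 ≤ r) :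
    |c/(2*r) - (1/2 - ψ^2/8)| ≤ 3 * |ψ^4| := by
  have hψ2 : ψ^2 < 1 := by nlinarith
  have hs_pos : 0 < s := by nlinarith
  have hs2 : s^2 < 1 := by nlinarith
  have hr_half : 1/2 ≤ r := by
    by_contra hcon
    push_neg at hcon
    nlinarith
  have hq : (3:ℝ)/4 ≤ 1 - ψ^2/4 := by nlinarith
  have d2 : (3:ℝ)/8 ≤ c + (1 - ψ^2/4)*r := by nlinarith
  have hden : (3:ℝ)/8 ≤ 2*r*(c + (1 - ψ^2/4)*r) := by nlinarith
  have hden_pos : (0:ℝ) < 2*r*(c + (1 - ψ^2/4)*r) := by linarith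
  have hE : c/(2*r) - (1/2 - ψ^2/8)
      = (c^2 - (1 - ψ^2/4)^2*r^2)/(2*r*(c + (1 - ψ^2/4)*r)) := by
    have h2r : (2*r) ≠ 0 := by positivity
    rw [eq_div_iff hden_pos.ne']
    linear_combination (c + (1 - ψ^2/4)*r) * (div_mul_cancel₀ c h2r)
  have hc2 : c^2 = 1 - s^2 := by linarith
  have e1 : ψ - s ≤ ψ^3/4 := by linarith
  have e2 : ψ + s ≤ 2*ψ := by linarith
  have e3 : 0 ≤ ψ - s := by linarith
  have e4 : 0 ≤ ψ + s := by linarith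
  have hA : ψ^2 - s^2 ≤ ψ^4/2 := by nlinarith [mul_le_mul e1 e2 e4 (by positivity : (0:ℝ) ≤ ψ^3/4)]
  have hA0 : 0 ≤ ψ^2 - s^2 := by nlinarith [mul_nonneg e3 e4]
  have h4a : 0 ≤ ψ^2*s^2 := by positivity
  have hψ4 : ψ^2*s^2 ≤ ψ^4 := by nlinarith
  have h5 : 0 ≤ ψ^4*s^2 := by positivity
  have h6 : ψ^4*s^2 ≤ ψ^4 := by nlinarith [pow_pos h0 4]
  have hP : |c^2 - (1 - ψ^2/4)^2*r^2| ≤ ψ^4 := by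
    rw [hc2, hr2, abs_le]
    have hPeq : (1-s^2) - (1-ψ^2/4)^2*((2-s^2)/2)
        = (ψ^2-s^2)/2 - ψ^2*s^2/4 - ψ^4/16 + ψ^4*s^2/32 := by ring
    rw [hPeq]
    constructor
    · linarith
    · linarith
  rw [hE, abs_div, abs_of_pos hden_pos]
  have habs4 : |ψ^4| = ψ^4 := abs_of_nonneg (by positivity)
  rw [habs4]
  calc |c^2 - (1 - ψ^2/4)^2*r^2| / (2*r*(c + (1 - ψ^2/4)*r))
      ≤ ψ^4 / (3/8) := div_le_div₀ (by positivity) hP (by norm_num) hden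
    _ ≤ 3 * ψ^4 := by nlinarith [pow_pos h0 4]

lemma my_key : (fun ψ : ℝ => Real.cos ψ / (2*Real.sqrt ((2 - Real.sin ψ^2)/2)) - (1/2 - ψ^2/8))
    =O[nhdsWithin 0 (Set.Ioi 0)] fun ψ => ψ^4 := by
  rw [isBigO_iff]
  refine ⟨3, ?_⟩
  filter_upwards [Ioo_mem_nhdsGT_of_mem (by norm_num : (0:ℝ) ∈ Set.Ico (0:ℝ) 1)] with ψ hψ
  obtain ⟨h0, h1⟩ := hψ
  have hcpos : 0 < Real.cos ψ :=
    Real.cos_pos_of_mem_Ioo ⟨by nlinarith [Real.pi_gt_three], by nlinarith [Real.pi_gt_three]⟩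
  have hs2lt : Real.sin ψ ^ 2 < 1 := by
    have h := Real.sin_sq_add_cos_sq ψ
    nlinarith
  exact my_aux ψ (Real.sin ψ) (Real.cos ψ) (Real.sqrt ((2 - Real.sin ψ^2)/2)) h0 h1
    (Real.sin_lt h0) (by nlinarith [Real.sin_gt_sub_cube h0, pow_pos h0 3]) (Real.sin_sq_add_cos_sq ψ)
    (Real.cos_pos_of_mem_Ioo ⟨by nlinarith [Real.pi_gt_three], by nlinarith [Real.pi_gt_three]⟩)
    (Real.sq_sqrt (by nlinarith)) (Real.sqrt_nonneg _)

end AuxLemmas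

/-- As `ψ → 0⁺`: `(𝓕₀¹ ± 𝓕₂¹)/(2√(2𝓕₀²)) = 1/2 - ψ²/8 + O(ψ⁴)`. -/
theorem calF_Z_expansion_at_zero :
    ((fun ψ => (calF 0 1 ψ + calF 2 1 ψ) / (2 * Real.sqrt (2 * calF 0 2 ψ))
        - (1 / 2 - ψ ^ 2 / 8)) =O[nhdsWithin 0 (Set.Ioi 0)] fun ψ => ψ ^ 4) ∧
    ((fun ψ => (calF 0 1 ψ - calF 2 1 ψ) / (2 * Real.sqrt (2 * calF 0 2 ψ))
        - (1 / 2 - ψ ^ 2 / 8)) =O[nhdsWithin 0 (Set.Ioi 0)] fun ψ => ψ ^ 4) := by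
  have hev : ∀ᶠ ψ in nhdsWithin (0:ℝ) (Set.Ioi 0), ψ ∈ Set.Ioo (0:ℝ) (Real.pi/4) :=
    Ioo_mem_nhdsGT_of_mem ⟨le_refl _, by positivity⟩
  have heq : ∀ ψ ∈ Set.Ioo (0:ℝ) (Real.pi/4),
      Real.cos ψ / (2*Real.sqrt ((2 - Real.sin ψ^2)/2)) - (1/2 - ψ^2/8)
      = (calF 0 1 ψ + calF 2 1 ψ) / (2 * Real.sqrt (2 * calF 0 2 ψ)) - (1/2 - ψ^2/8) := by
    intro ψ hψ
    have h2 : 2 * calF 0 2 ψ = (2 - Real.sin ψ^2)/2 := by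
      rw [my_calF02 hψ.2.le]; ring
    rw [my_calF01 hψ.2.le, my_calF21 hψ.2.le, h2, add_zero]
  have heq' : ∀ ψ ∈ Set.Ioo (0:ℝ) (Real.pi/4),
      Real.cos ψ / (2*Real.sqrt ((2 - Real.sin ψ^2)/2)) - (1/2 - ψ^2/8)
      = (calF 0 1 ψ - calF 2 1 ψ) / (2 * Real.sqrt (2 * calF 0 2 ψ)) - (1/2 - ψ^2/8) := by
    intro ψ hψ
    have h2 : 2 * calF 0 2 ψ = (2 - Real.sin ψ^2)/2 := by
      rw [my_calF02 hψ.2.le]; ring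
    rw [my_calF01 hψ.2.le, my_calF21 hψ.2.le, h2, sub_zero]
  constructor
  · exact my_key.congr' (hev.mono fun ψ hψ => heq ψ hψ) EventuallyEq.rfl
  · exact my_key.congr' (hev.mono fun ψ hψ => heq' ψ hψ) EventuallyEq.rfl
end

section
/- Let u : ℝ² → ℝ² and K : ℝ² → ℝ be continuously differentiable, suppose |u(x)| = 1 for every x ∈ ℝ², and suppose that at every point (u·∇)u + (u^⊥·∇K) u^⊥ = 0, where u^⊥ = (−u₂, u₁). Then div( e^{−K} u^⊥ ) = 0 at every point, i.e. ∂₁( e^{−K} (−u₂) ) + ∂₂( e^{−K} u₁ ) = 0. -/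
/-- Partial derivative in the first coordinate direction. -/
noncomputable def pd1 (f : ℝ × ℝ → ℝ) (x : ℝ × ℝ) : ℝ := fderiv ℝ f x (1, 0)

/-- Partial derivative in the second coordinate direction. -/
noncomputable def pd2 (f : ℝ × ℝ → ℝ) (x : ℝ × ℝ) : ℝ := fderiv ℝ f x (0, 1)

/-- If `u : ℝ² → ℝ²` and `K : ℝ² → ℝ` are `C¹`, `|u| = 1` everywhere, and
`(u·∇)u + (u^⊥·∇K) u^⊥ = 0` with `u^⊥ = (-u₂, u₁)`, then `div(e^{-K} u^⊥) = 0`. -/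
theorem collimation_geometric_optics
    (u : ℝ × ℝ → ℝ × ℝ) (K : ℝ × ℝ → ℝ)
    (hu : ContDiff ℝ 1 u) (hK : ContDiff ℝ 1 K)
    (hnorm : ∀ x, Real.sqrt ((u x).1 ^ 2 + (u x).2 ^ 2) = 1)
    (heq1 : ∀ x,
      (u x).1 * pd1 (fun y => (u y).1) x + (u x).2 * pd2 (fun y => (u y).1) x
        + (-(u x).2 * pd1 K x + (u x).1 * pd2 K x) * (-(u x).2) = 0)
    (heq2 : ∀ x,
      (u x).1 * pd1 (fun y => (u y).2) x + (u x).2 * pd2 (fun y => (u y).2) x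
        + (-(u x).2 * pd1 K x + (u x).1 * pd2 K x) * (u x).1 = 0) :
    ∀ x, pd1 (fun y => Real.exp (-K y) * (-(u y).2)) x
        + pd2 (fun y => Real.exp (-K y) * (u y).1) x = 0 := by
  intro x
  have hud := hu.differentiable one_ne_zero
  have hKd := hK.differentiable one_ne_zero
  have ha : DifferentiableAt ℝ (fun y => (u y).1) x := (hud x).fst
  have hb : DifferentiableAt ℝ (fun y => (u y).2) x := (hud x).snd
  have hKa : DifferentiableAt ℝ K x := hKd x
  set a' := fderiv ℝ (fun y => (u y).1) x with ha'
  set b' := fderiv ℝ (fun y => (u y).2) x with hb'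
  set K' := fderiv ℝ K x with hK'
  have hafd : HasFDerivAt (fun y => (u y).1) a' x := ha.hasFDerivAt
  have hbfd : HasFDerivAt (fun y => (u y).2) b' x := hb.hasFDerivAt
  have hKfd : HasFDerivAt K K' x := hKa.hasFDerivAt
  -- derivative of exp(-K)
  have hE : HasFDerivAt (fun y => Real.exp (-K y)) (Real.exp (-K x) • (-K')) x :=
    (hKfd.neg).exp
  -- derivative of first product
  have hP1 : HasFDerivAt (fun y => Real.exp (-K y) * (-(u y).2))
      (Real.exp (-K x) • (-b') + (-(u x).2) • (Real.exp (-K x) • (-K'))) x :=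
    hE.mul hbfd.neg
  have hP2 : HasFDerivAt (fun y => Real.exp (-K y) * (u y).1)
      (Real.exp (-K x) • a' + (u x).1 • (Real.exp (-K x) • (-K'))) x :=
    hE.mul hafd
  -- norm constraint
  have hsq : (fun y => (u y).1 ^ 2 + (u y).2 ^ 2) = fun _ => (1 : ℝ) := by
    funext y
    have h := hnorm y
    have hnn : (0:ℝ) ≤ (u y).1 ^ 2 + (u y).2 ^ 2 := by positivity
    nlinarith [Real.sq_sqrt hnn]
  have hC : HasFDerivAt (fun y => (u y).1 ^ 2 + (u y).2 ^ 2)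
      (((u x).1 • a' + (u x).1 • a') + ((u x).2 • b' + (u x).2 • b')) x := by
    have h1 : HasFDerivAt (fun y => (u y).1 * (u y).1) ((u x).1 • a' + (u x).1 • a') x :=
      hafd.mul hafd
    have h2 : HasFDerivAt (fun y => (u y).2 * (u y).2) ((u x).2 • b' + (u x).2 • b') x :=
      hbfd.mul hbfd
    have := h1.add h2
    simpa [pow_two, Pi.add_def] using this
  have hCz : (((u x).1 • a' + (u x).1 • a') + ((u x).2 • b' + (u x).2 • b'))
      = (0 : ℝ × ℝ →L[ℝ] ℝ) := by
    have hC2 := hC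
    rw [hsq] at hC2
    exact hC2.unique (hasFDerivAt_const 1 x)
  have hc1 : (u x).1 * a' (1,0) + (u x).2 * b' (1,0) = 0 := by
    have := congrArg (fun L : ℝ × ℝ →L[ℝ] ℝ => L (1,0)) hCz
    simp at this
    linarith
  have hc2 : (u x).1 * a' (0,1) + (u x).2 * b' (0,1) = 0 := by
    have := congrArg (fun L : ℝ × ℝ →L[ℝ] ℝ => L (0,1)) hCz
    simp at this
    linarith
  have hn : (u x).1 ^ 2 + (u x).2 ^ 2 = 1 := congrFun hsq x
  have e1 := heq1 x
  have e2 := heq2 x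
  rw [pd1, pd2, hP1.fderiv, hP2.fderiv]
  simp only [pd1, pd2, ← ha', ← hb', ← hK'] at e1 e2
  simp only [ContinuousLinearMap.add_apply, ContinuousLinearMap.smul_apply,
    ContinuousLinearMap.neg_apply, smul_eq_mul]
  set ax := (u x).1
  set bx := (u x).2
  set ex := Real.exp (-K x)
  set p1a := a' (1,0)
  set p2a := a' (0,1)
  set p1b := b' (1,0)
  set p2b := b' (0,1)
  set K1 := K' (1,0)
  set K2 := K' (0,1)
  linear_combination ex*bx*e1 - ex*bx*hc1 - ex*ax*e2 + ex*ax*hc2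
    - ex*(p2a - p1b - (-bx*K1 + ax*K2))*hn
end
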